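/- The image of θ is exactly the k-subalgebra of k[x₀,x₁,x₂] spanned by all monomials of even total degree; equivalently, a polynomial lies in Im(θ) if and only if every monomial appearing in it has even total degree. -/

import Mathlib

open MvPolynomial

noncomputable def theta (k : Type*) [CommRing k] :
    MvPolynomial (Fin 6) k →ₐ[k] MvPolynomial (Fin 3) k :=
  MvPolynomial.aeval
    ![X 0 * X 0, X 0 * X 1, X 0 * X 2, X 1 * X 1, X 1 * X 2, X 2 * X 2]

noncomputable def evenSub (k : Type*) [CommRing k] :
    Subalgebra k (MvPolynomial (Fin 3) k) where
  carrier := {f | ∀ d ∈ f.support, Even (∑ i : Fin 3, d i)}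
  mul_mem' {a b} ha hb := by
    intro d hd
    have h := MvPolynomial.support_mul a b hd
    rw [Finset.mem_add] at h
    obtain ⟨u, hu, v, hv, rfl⟩ := h
    have : ∑ i : Fin 3, (u + v) i = (∑ i : Fin 3, u i) + ∑ i : Fin 3, v i := by
      simp [Finset.sum_add_distrib]
    rw [this]
    exact (ha u hu).add (hb v hv)
  add_mem' {a b} ha hb := by
    intro d hd
    have h := MvPolynomial.support_add hd
    rw [Finset.mem_union] at h
    rcases h with h | h
    · exact ha d h
    · exact hb d h
  algebraMap_mem' r := by
    intro d hd
    rw [MvPolynomial.mem_support_iff, MvPolynomial.algebraMap_eq,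
      MvPolynomial.coeff_C] at hd
    have h : d = 0 := by
      by_cases h0 : (0 : Fin 3 →₀ ℕ) = d
      · exact h0.symm
      · simp [h0] at hd
    subst h; simp
  one_mem' := by
    intro d hd
    rw [MvPolynomial.mem_support_iff, MvPolynomial.coeff_one] at hd
    have h : d = 0 := by
      by_cases h0 : (0 : Fin 3 →₀ ℕ) = d
      · exact h0.symm
      · simp [h0] at hd
    subst h; simp

lemma XX_mem_range (k : Type*) [CommRing k] (i j : Fin 3) :
    (X i * X j : MvPolynomial (Fin 3) k) ∈ (theta k).range := by
  fin_cases i <;> fin_cases j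
  · exact ⟨X 0, by simp [theta]⟩
  · exact ⟨X 1, by simp [theta]⟩
  · exact ⟨X 2, by simp [theta]⟩
  · exact ⟨X 1, by simp [theta]; ring⟩
  · exact ⟨X 3, by simp [theta]⟩
  · exact ⟨X 4, by simp [theta]⟩
  · exact ⟨X 2, by simp [theta]; ring⟩
  · exact ⟨X 4, by simp [theta]; ring⟩
  · exact ⟨X 5, by simp [theta]⟩

lemma monomial_mem_range (k : Type*) [CommRing k] :
    ∀ n : ℕ, ∀ d : Fin 3 →₀ ℕ, (∑ i : Fin 3, d i) = n → Even n →
      (monomial d (1 : k)) ∈ (theta k).range := by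
  intro n
  induction n using Nat.strong_induction_on with
  | _ n ih =>
    intro d hd hev
    rcases Nat.eq_zero_or_pos n with rfl | hn
    · have hd0 : d = 0 := by
        ext i
        have := Finset.sum_eq_zero_iff.mp hd i (Finset.mem_univ i)
        simpa using this
      subst hd0
      simpa [MvPolynomial.monomial_zero'] using (theta k).range.one_mem
    · -- n ≥ 2 since even and positive
      have hi : ∃ i, d i ≠ 0 := by
        by_contra h
        push_neg at h
        have : (∑ i : Fin 3, d i) = 0 := Finset.sum_eq_zero fun i _ => h i
        omega
      obtain ⟨i, hi⟩ := hi
      have hle1 : Finsupp.single i 1 ≤ d := by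
        rw [Finsupp.single_le_iff]; omega
      set d' := d - Finsupp.single i 1 with hd'
      have hdd : d' + Finsupp.single i 1 = d := tsub_add_cancel_of_le hle1
      have hsum' : (∑ m : Fin 3, d' m) = n - 1 := by
        have : (∑ m : Fin 3, d' m) + (∑ m : Fin 3, (Finsupp.single i 1) m)
            = ∑ m : Fin 3, d m := by
          rw [← Finset.sum_add_distrib]
          exact Finset.sum_congr rfl fun m _ => by
            rw [← Finsupp.add_apply, hdd]
        have h1 : (∑ m : Fin 3, (Finsupp.single i 1 : Fin 3 →₀ ℕ) m) = 1 := by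
          simp [Finsupp.single_apply]
        omega
      have hn1 : 1 ≤ n - 1 := by
        rcases hev with ⟨m, hm⟩; omega
      have hj : ∃ j, d' j ≠ 0 := by
        by_contra h
        push_neg at h
        have : (∑ m : Fin 3, d' m) = 0 := Finset.sum_eq_zero fun m _ => h m
        omega
      obtain ⟨j, hj⟩ := hj
      have hle2 : Finsupp.single j 1 ≤ d' := by
        rw [Finsupp.single_le_iff]; omega
      set d'' := d' - Finsupp.single j 1 with hd''
      have hdd2 : d'' + Finsupp.single j 1 = d' := tsub_add_cancel_of_le hle2
      have hsum'' : (∑ m : Fin 3, d'' m) = n - 2 := by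
        have : (∑ m : Fin 3, d'' m) + (∑ m : Fin 3, (Finsupp.single j 1) m)
            = ∑ m : Fin 3, d' m := by
          rw [← Finset.sum_add_distrib]
          exact Finset.sum_congr rfl fun m _ => by
            rw [← Finsupp.add_apply, hdd2]
        have h1 : (∑ m : Fin 3, (Finsupp.single j 1 : Fin 3 →₀ ℕ) m) = 1 := by
          simp [Finsupp.single_apply]
        omega
      have hev'' : Even (n - 2) := by
        rcases hev with ⟨m, hm⟩; exact ⟨m - 1, by omega⟩
      have hmem : (monomial d'' (1 : k)) ∈ (theta k).range :=
        ih (n - 2) (by omega) d'' hsum'' hev''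
      have key : (monomial d (1 : k))
          = monomial d'' 1 * (X j * X i) := by
        rw [MvPolynomial.X, MvPolynomial.X, MvPolynomial.monomial_mul,
          MvPolynomial.monomial_mul]
        congr 1
        · rw [← hdd, ← hdd2]; abel_nf
        · ring
      rw [key]
      exact mul_mem hmem (XX_mem_range k j i)

/-- The image of θ is exactly the span of monomials of even total degree:
a polynomial lies in the image iff every monomial appearing in it has even total degree. -/
theorem range_theta_eq_even_monomials (k : Type*) [Field k]
    (f : MvPolynomial (Fin 3) k) :
    f ∈ (theta k).range ↔ ∀ d ∈ f.support, Even (∑ i : Fin 3, d i) := by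
  constructor
  · rintro ⟨g, rfl⟩
    have hrange : (theta k).range ≤ evenSub k := by
      rw [theta, ← Algebra.adjoin_range_eq_range_aeval]
      apply Algebra.adjoin_le
      rintro _ ⟨m, rfl⟩
      fin_cases m <;>
      · intro d hd
        have := MvPolynomial.support_mul _ _ hd
        rw [Finset.mem_add] at this
        obtain ⟨u, hu, v, hv, rfl⟩ := this
        rw [MvPolynomial.support_X] at hu hv
        simp only [Finset.mem_singleton] at hu hv
        subst hu; subst hv
        simp [Finsupp.single_apply, Finset.sum_add_distrib]
    exact hrange ⟨g, rfl⟩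
  · intro h
    rw [f.as_sum]
    apply sum_mem
    intro d hd
    have : (monomial d (coeff d f)) = C (coeff d f) * monomial d 1 := by
      simp [MvPolynomial.C_mul_monomial]
    rw [this]
    exact mul_mem ((theta k).range.algebraMap_mem _)
      (monomial_mem_range k _ d rfl (h d hd))
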